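/- Let μ, ν, α, β > 0, ω̄ > 0, φ̄ > 0 and Ḡ, S̄, T̄, F̄ ≥ 0 with Ḡ + S̄ + T̄ + F̄ = 1. For jT, jF ∈ ℝ define the real 4×4 matrix A(jT, jF) with rows (−αF̄ − βT̄, μ, ν − βḠ·jT, φ̄ − αḠ·jF), (βT̄, −μ − αF̄ − ω̄, βḠ·jT, −αS̄·jF), (0, ω̄, −ν − αF̄, −αT̄·jF) and (0, 0, 0, α(1−F̄)·jF − αF̄ − φ̄). If A(1,1) is Hurwitz stable, then A(jT, jF) is Hurwitz stable for all jT ≤ 1 and jF ≤ 1. -/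

import Mathlib

/-- A real square matrix is Hurwitz stable if every complex root of its
characteristic polynomial has strictly negative real part. -/
def HurwitzStable {n : ℕ} (M : Matrix (Fin n) (Fin n) ℝ) : Prop :=
  ∀ z : ℂ, Polynomial.aeval z M.charpoly = 0 → z.re < 0

/-- The linearization of the spatially extended Staver–Levin model about a
homogeneous equilibrium, at Fourier-transform values `jT`, `jF` of the
savanna and forest seed-dispersal kernels. -/
def slMatrix (μ ν α β ω φ G S T F jT jF : ℝ) : Matrix (Fin 4) (Fin 4) ℝ :=
  !![-α * F - β * T, μ, ν - β * G * jT, φ - α * G * jF;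
     β * T, -μ - α * F - ω, β * G * jT, -α * S * jF;
     0, ω, -ν - α * F, -α * T * jF;
     0, 0, 0, α * (1 - F) * jF - α * F - φ]

set_option maxHeartbeats 1000000 in
theorem SL.det_fin_four' {R : Type*} [CommRing R] (A : Matrix (Fin 4) (Fin 4) R) :
    A.det =
      A 0 0 * (A 1 1*(A 2 2*A 3 3 - A 2 3*A 3 2) - A 1 2*(A 2 1*A 3 3 - A 2 3*A 3 1)
        + A 1 3*(A 2 1*A 3 2 - A 2 2*A 3 1))
    - A 0 1 * (A 1 0*(A 2 2*A 3 3 - A 2 3*A 3 2) - A 1 2*(A 2 0*A 3 3 - A 2 3*A 3 0)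
        + A 1 3*(A 2 0*A 3 2 - A 2 2*A 3 0))
    + A 0 2 * (A 1 0*(A 2 1*A 3 3 - A 2 3*A 3 1) - A 1 1*(A 2 0*A 3 3 - A 2 3*A 3 0)
        + A 1 3*(A 2 0*A 3 1 - A 2 1*A 3 0))
    - A 0 3 * (A 1 0*(A 2 1*A 3 2 - A 2 2*A 3 1) - A 1 1*(A 2 0*A 3 2 - A 2 2*A 3 0)
        + A 1 2*(A 2 0*A 3 1 - A 2 1*A 3 0)) := by
  rw [Matrix.det_succ_row_zero]
  simp [Fin.sum_univ_succ, Matrix.det_fin_three, Matrix.submatrix_apply, Fin.succAbove]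
  ring

lemma SL.aeval_charpoly' {n : ℕ} (N : Matrix (Fin n) (Fin n) ℝ) (z : ℂ) :
    Polynomial.aeval z N.charpoly
      = (Matrix.of fun i j => (if i = j then z else 0) - (N i j : ℂ)).det := by
  rw [Polynomial.aeval_def, ← Polynomial.eval_map, ← Matrix.charpoly_map N (algebraMap ℝ ℂ),
    Matrix.charpoly, ← Polynomial.coe_evalRingHom, RingHom.map_det]
  congr 1
  ext i j
  by_cases h : i = j <;>
    simp [h, Matrix.map_apply]

@[simp] lemma SL.vecHead_vecTail_const {A : Type*} {n : ℕ} (c : A) :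
    Matrix.vecHead (Matrix.vecTail fun _ : Fin (n+2) => c) = c := rfl

set_option maxHeartbeats 1000000 in
lemma SL.slMatrix_aeval (μ ν α β ω φ G S T F jT jF : ℝ) (z : ℂ) :
    Polynomial.aeval z (slMatrix μ ν α β ω φ G S T F jT jF).charpoly =
      (z - (α * (1 - F) * jF - α * F - φ : ℝ)) * (z + (α * F : ℝ)) *
        (z ^ 2 + (2*α*F + β*T + μ + ω + ν : ℝ) * z +
          ((α*F)^2 + α*F*(β*T+μ+ω+ν) + β*T*ω + β*T*ν + μ*ν + ω*ν - ω*β*G*jT : ℝ)) := by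
  rw [SL.aeval_charpoly', SL.det_fin_four']
  simp only [Matrix.of_apply, slMatrix, Matrix.cons_val', Matrix.cons_val_zero,
    Matrix.cons_val_one, Matrix.head_cons, Matrix.empty_val', Matrix.cons_val_fin_one,
    Matrix.head_fin_const, SL.vecHead_vecTail_const]
  norm_num [SL.vecHead_vecTail_const]
  push_cast
  ring

/-- Roots of a monic real quadratic with positive coefficients have negative real part. -/
lemma SL.quad_root_re_neg (P Q : ℝ) (hP : 0 < P) (hQ : 0 < Q) (z : ℂ)
    (hz : z ^ 2 + (P : ℂ) * z + (Q : ℂ) = 0) : z.re < 0 := by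
  have hre := congrArg Complex.re hz
  have him := congrArg Complex.im hz
  simp [pow_two, Complex.add_re, Complex.mul_re, Complex.add_im, Complex.mul_im] at hre him
  have him' : z.im * (2 * z.re + P) = 0 := by nlinarith [him]
  rcases mul_eq_zero.mp him' with h | h
  · rw [h] at hre
    by_contra hx
    push_neg at hx
    nlinarith
  · linarith

/-- Converse piece: if the quadratic `z² + Pz + Q` (with `P > 0`) is Hurwitz,
then `Q > 0`. -/
lemma SL.quad_Q_pos (P Q : ℝ) (hP : 0 < P)
    (hstab : ∀ z : ℂ, z ^ 2 + (P : ℂ) * z + (Q : ℂ) = 0 → z.re < 0) : 0 < Q := by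
  by_contra h
  push_neg at h
  have hD : 0 ≤ P ^ 2 - 4 * Q := by nlinarith
  set s := Real.sqrt (P ^ 2 - 4 * Q) with hs
  have hs2 : s ^ 2 = P ^ 2 - 4 * Q := Real.sq_sqrt hD
  set r := (-P + s) / 2 with hr
  have hroot : r ^ 2 + P * r + Q = 0 := by rw [hr]; linear_combination hs2 / 4
  have hrC : (r : ℂ) ^ 2 + (P : ℂ) * r + (Q : ℂ) = 0 := by
    exact_mod_cast congrArg (fun t : ℝ => (t : ℂ)) hroot
  have hlt := hstab r hrC
  rw [Complex.ofReal_re] at hlt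
  have hsP : P ≤ s := by
    rw [hs]
    calc P = Real.sqrt (P ^ 2) := by rw [Real.sqrt_sq hP.le]
    _ ≤ Real.sqrt (P ^ 2 - 4 * Q) := Real.sqrt_le_sqrt (by nlinarith)
  have : 0 ≤ r := by rw [hr]; linarith
  linarith

theorem stmt_5 (μ ν α β ω φ G S T F : ℝ)
    (hμ : 0 < μ) (hν : 0 < ν) (hα : 0 < α) (hβ : 0 < β)
    (hω : 0 < ω) (hφ : 0 < φ)
    (hG : 0 ≤ G) (hS : 0 ≤ S) (hT : 0 ≤ T) (hF : 0 ≤ F)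
    (hsum : G + S + T + F = 1)
    (h1 : HurwitzStable (slMatrix μ ν α β ω φ G S T F 1 1)) :
    ∀ jT jF : ℝ, jT ≤ 1 → jF ≤ 1 →
      HurwitzStable (slMatrix μ ν α β ω φ G S T F jT jF) := by
  intro jT jF hjT hjF z hz
  rw [SL.slMatrix_aeval] at hz
  have hP : 0 < 2*α*F + β*T + μ + ω + ν := by positivity
  have h1F : 0 ≤ 1 - F := by linarith
  have h1' : ∀ w : ℂ, (w - (α * (1 - F) * 1 - α * F - φ : ℝ)) * (w + (α * F : ℝ)) *
      (w ^ 2 + (2*α*F + β*T + μ + ω + ν : ℝ) * w +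
        ((α*F)^2 + α*F*(β*T+μ+ω+ν) + β*T*ω + β*T*ν + μ*ν + ω*ν - ω*β*G*1 : ℝ)) = 0 →
      w.re < 0 := by
    intro w hw
    exact h1 w (by rw [SL.slMatrix_aeval]; exact hw)
  have hαF : 0 < α * F := by
    have := h1' ((-(α * F) : ℝ) : ℂ) (by push_cast; ring)
    simpa using this
  have hd1 : α * (1 - F) * 1 - α * F - φ < 0 := by
    have := h1' ((α * (1 - F) * 1 - α * F - φ : ℝ) : ℂ) (by push_cast; ring)
    simpa using this
  have hQ1 : 0 < (α*F)^2 + α*F*(β*T+μ+ω+ν) + β*T*ω + β*T*ν + μ*ν + ω*ν - ω*β*G*1 := by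
    apply SL.quad_Q_pos _ _ hP
    intro w hw
    exact h1' w (by rw [hw, mul_zero])
  have hQjT : 0 < (α*F)^2 + α*F*(β*T+μ+ω+ν) + β*T*ω + β*T*ν + μ*ν + ω*ν - ω*β*G*jT := by
    nlinarith [mul_nonneg (mul_nonneg hω.le hβ.le) (mul_nonneg hG (sub_nonneg.mpr hjT))]
  rcases mul_eq_zero.mp hz with h | h
  · rcases mul_eq_zero.mp h with h | h
    · have hzd : z = ((α * (1 - F) * jF - α * F - φ : ℝ) : ℂ) := by rwa [sub_eq_zero] at h
      rw [hzd, Complex.ofReal_re]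
      nlinarith [mul_nonneg (mul_nonneg hα.le h1F) (sub_nonneg.mpr hjF)]
    · have hzd : z = -((α * F : ℝ) : ℂ) := by linear_combination h
      rw [hzd]
      simpa using hαF
  · exact SL.quad_root_re_neg _ _ hP hQjT z h
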